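/- Let s₁, …, s_n be pairwise distinct complex numbers with |s_j| < 1 for all j. Then the n×n matrix K with entries K_{jl} = 1/(1 − s_j · conj(s_l)) is Hermitian and positive definite. -/

import Mathlib

open Matrix
open scoped ComplexOrder

/-- If all the "power sums" of a nonzero vector against pairwise distinct nodes
vanish, we get a contradiction (Vandermonde). -/
lemma exists_power_sum_ne_zero {n : ℕ} (s : Fin n → ℂ) (hdist : Function.Injective s)
    (x : Fin n → ℂ) (hx : x ≠ 0) :
    ∃ k : ℕ, (∑ j, (starRingEnd ℂ) (x j) * s j ^ k) ≠ 0 := by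
  by_contra h
  push_neg at h
  apply hx
  have hdet : (Matrix.vandermonde s).det ≠ 0 := by
    rw [Matrix.det_vandermonde]
    apply Finset.prod_ne_zero_iff.mpr
    intro i _
    apply Finset.prod_ne_zero_iff.mpr
    intro j hj
    simp only [Finset.mem_Ioi] at hj
    exact sub_ne_zero_of_ne (fun he => absurd (hdist he.symm) hj.ne)
  have hvm : (fun j => (starRingEnd ℂ) (x j)) ᵥ* Matrix.vandermonde s = 0 := by
    funext l
    simpa [Matrix.vecMul, dotProduct, Matrix.vandermonde] using h (l : ℕ)
  have hinv : (fun j => (starRingEnd ℂ) (x j)) = 0 := by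
    have := congrArg (fun v => v ᵥ* (Matrix.vandermonde s)⁻¹) hvm
    simpa [Matrix.vecMul_vecMul, Matrix.mul_nonsing_inv _ (isUnit_iff_ne_zero.mpr hdet)]
      using this
  funext j
  have := congrFun hinv j
  simpa using congrArg (starRingEnd ℂ) this

/-- The Cauchy-like matrix `(1/(1 - s_j · conj s_l))` built from pairwise distinct
complex numbers in the open unit disk is Hermitian and positive definite. -/
theorem discrete_cauchy_matrix_posDef
    {n : ℕ} (s : Fin n → ℂ)
    (hdist : Function.Injective s)
    (habs : ∀ j : Fin n, ‖s j‖ < 1)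
    (K : Matrix (Fin n) (Fin n) ℂ)
    (hK : ∀ j l : Fin n, K j l = 1 / (1 - s j * (starRingEnd ℂ) (s l))) :
    K.IsHermitian ∧ K.PosDef := by
  have hnorm : ∀ j l : Fin n, ‖s j * (starRingEnd ℂ) (s l)‖ < 1 := by
    intro j l
    rw [norm_mul, Complex.norm_conj]
    have h1 := habs j
    have h2 := habs l
    have n1 := norm_nonneg (s j)
    have n2 := norm_nonneg (s l)
    nlinarith
  have hherm : K.IsHermitian := by
    ext j l
    simp only [Matrix.conjTranspose_apply, hK]
    rw [star_div₀, star_one, star_sub, star_one, star_mul']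
    simp only [Complex.star_def, Complex.conj_conj]
    ring_nf
  refine ⟨hherm, Matrix.PosDef.of_dotProduct_mulVec_pos hherm ?_⟩
  intro x hx
  set f : ℕ → ℂ := fun k => ∑ j, (starRingEnd ℂ) (x j) * s j ^ k with hf
  -- the quadratic form equals the tsum of |f k|²
  have hsummable : ∀ j l : Fin n,
      Summable (fun k : ℕ => (starRingEnd ℂ) (x j) * x l * (s j * (starRingEnd ℂ) (s l)) ^ k) :=
    fun j l => (summable_geometric_of_norm_lt_one (hnorm j l)).mul_left _
  have key : star x ⬝ᵥ K *ᵥ x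
      = ∑' k : ℕ, ∑ j, ∑ l, (starRingEnd ℂ) (x j) * x l * (s j * (starRingEnd ℂ) (s l)) ^ k := by
    rw [dotProduct, Summable.tsum_finsetSum (fun j _ => summable_sum (fun l _ => hsummable j l))]
    congr 1
    funext j
    rw [Matrix.mulVec, dotProduct, Summable.tsum_finsetSum (fun l _ => hsummable j l), Finset.mul_sum]
    congr 1
    funext l
    rw [hK, one_div, ← tsum_geometric_of_norm_lt_one (hnorm j l),
      show star x j * ((∑' k : ℕ, (s j * (starRingEnd ℂ) (s l)) ^ k) * x l)
        = (star x j * x l) * ∑' k : ℕ, (s j * (starRingEnd ℂ) (s l)) ^ k from by ring,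
      ← tsum_mul_left]
    exact tsum_congr fun k => by simp [Complex.star_def]
  have hterm : ∀ k : ℕ, (∑ j, ∑ l, (starRingEnd ℂ) (x j) * x l * (s j * (starRingEnd ℂ) (s l)) ^ k)
      = ((Complex.normSq (f k) : ℝ) : ℂ) := by
    intro k
    rw [← Complex.mul_conj (f k)]
    simp only [hf, map_sum, _root_.map_mul, Complex.conj_conj, map_pow, Finset.sum_mul]
    congr 1; funext j
    rw [Finset.mul_sum]
    congr 1; funext l
    ring
  have hF : Summable (fun k : ℕ =>
      ∑ j, ∑ l, (starRingEnd ℂ) (x j) * x l * (s j * (starRingEnd ℂ) (s l)) ^ k) :=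
    summable_sum (fun j _ => summable_sum (fun l _ => hsummable j l))
  have hgsum : Summable (fun k : ℕ => Complex.normSq (f k)) := by
    rw [← Complex.summable_ofReal]
    exact hF.congr (fun k => (hterm k))
  obtain ⟨k₀, hk₀⟩ := exists_power_sum_ne_zero s hdist x hx
  have hpos : 0 < ∑' k : ℕ, Complex.normSq (f k) :=
    Summable.tsum_pos hgsum (fun k => Complex.normSq_nonneg _) k₀ (Complex.normSq_pos.mpr hk₀)
  rw [key, tsum_congr hterm, ← Complex.ofReal_tsum]
  exact_mod_cast hpos
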